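/- Let F be holomorphic on a domain containing the closed polydisc {|z_i| ≤ 2R} ⊆ ℂᵖ, let m ≥ 1, and suppose the Taylor expansion of F at 0 is F(z) = c + Σ_{i₁+⋯+i_p ≥ m} a_{i₁,…,i_p} z^{i₁}⋯z^{i_p} (i.e. all nonconstant terms of degree < m vanish). Then for 0 < ε < 1/2 and all z in the ball {|z| ≤ p^{-1} ε R}, |F(z) − c| ≤ 2 (2π)^{-p/2} R^{-p} ε^m (∫_{|z_i| ≤ 2R} |F|² dλ)^{1/2}. -/

import Mathlib

open MeasureTheory Real

open scoped ENNReal NNReal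

section Auxiliary
open Set


lemma exp_theta_integral (c : ℂ) (hc : c ≠ 0) (n : ℤ) (hn : c = n * Complex.I) :
    ∫ θ in Ioo (-π) π, Complex.exp (c * θ) = 0 := by
  have hle : (-π : ℝ) ≤ π := by linarith [Real.pi_pos]
  rw [← MeasureTheory.integral_Ioc_eq_integral_Ioo, ← intervalIntegral.integral_of_le hle,
    integral_exp_mul_complex hc]
  have h1 : Complex.exp (c * π) = (-1 : ℂ) ^ n := by
    rw [hn]
    rw [show ((n : ℂ) * Complex.I * π) = n * (π * Complex.I) by ring]
    rw [Complex.exp_int_mul, Complex.exp_pi_mul_I]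
  have h2 : Complex.exp (c * ((-π : ℝ) : ℂ)) = (-1 : ℂ) ^ n := by
    rw [hn]
    rw [show ((n : ℂ) * Complex.I * ((-π : ℝ) : ℂ)) = ((-n : ℤ) : ℂ) * (π * Complex.I) by
      push_cast; ring]
    rw [Complex.exp_int_mul, Complex.exp_pi_mul_I, zpow_neg, ← inv_zpow,
      show ((-1 : ℂ))⁻¹ = -1 by norm_num]
  rw [h1, h2, sub_self, zero_div]

lemma polar_point_eq (q : ℝ × ℝ) :
    Complex.polarCoord.symm q = (q.1 : ℂ) * Complex.exp (q.2 * Complex.I) := by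
  rw [Complex.polarCoord_symm_apply, Complex.exp_mul_I]
  norm_num [Complex.ofReal_cos, Complex.ofReal_sin]

lemma disc_monomial_integral (s : ℝ) (hs : 0 < s) (a b : ℕ) :
    ∫ w in Metric.closedBall (0:ℂ) s, w ^ a * (starRingEnd ℂ) w ^ b =
      if a = b then ((π * s ^ (2 * a + 2) / (a + 1) : ℝ) : ℂ) else 0 := by
  have hle : (-π : ℝ) ≤ π := by linarith [Real.pi_pos]
  rw [← MeasureTheory.integral_indicator (measurableSet_closedBall)]
  rw [← Complex.integral_comp_polarCoord_symm]
  rw [polarCoord_target]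
  set c : ℂ := ((a : ℂ) - b) * Complex.I with hcdef
  have key : ∀ q ∈ Set.Ioi (0:ℝ) ×ˢ Set.Ioo (-π) π,
      q.1 • (Metric.closedBall (0:ℂ) s).indicator
          (fun w => w ^ a * (starRingEnd ℂ) w ^ b) (Complex.polarCoord.symm q)
        = ((Set.Iic s).indicator (fun r : ℝ => ((r ^ (a+b+1) : ℝ) : ℂ)) q.1)
            * Complex.exp (c * q.2) := by
    rintro ⟨r, θ⟩ ⟨hr, hθ⟩
    simp only [Set.mem_Ioi] at hr
    have habs : ‖Complex.polarCoord.symm (r, θ)‖ = r := by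
      rw [Complex.norm_polarCoord_symm]; exact abs_of_pos hr
    have hval : (Complex.polarCoord.symm (r, θ)) ^ a
        * (starRingEnd ℂ) (Complex.polarCoord.symm (r, θ)) ^ b
        = ((r ^ (a+b) : ℝ) : ℂ) * Complex.exp (c * θ) := by
      rw [polar_point_eq]
      simp only [map_mul, Complex.conj_ofReal, ← Complex.exp_conj, map_mul,
        Complex.conj_I, Complex.conj_ofReal]
      rw [mul_pow, mul_pow, ← Complex.exp_nat_mul, ← Complex.exp_nat_mul,
        mul_mul_mul_comm, ← Complex.exp_add, hcdef]
      push_cast [pow_add]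
      congr 1
      ring_nf
    by_cases hmem : (r : ℝ) ≤ s
    · have hm1 : Complex.polarCoord.symm (r, θ) ∈ Metric.closedBall (0:ℂ) s := by
        rw [Metric.mem_closedBall, dist_zero_right, habs]; exact hmem
      rw [Set.indicator_of_mem hm1, Set.indicator_of_mem (Set.mem_Iic.mpr hmem), hval]
      rw [Complex.real_smul]
      push_cast
      ring
    · have hm1 : Complex.polarCoord.symm (r, θ) ∉ Metric.closedBall (0:ℂ) s := by
        rw [Metric.mem_closedBall, dist_zero_right, habs]; exact hmem
      rw [Set.indicator_of_notMem hm1,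
        Set.indicator_of_notMem (by simpa using hmem : (r:ℝ) ∉ Set.Iic s), smul_zero, zero_mul]
  rw [MeasureTheory.setIntegral_congr_fun
    ((measurableSet_Ioi).prod measurableSet_Ioo) key]
  rw [MeasureTheory.Measure.volume_eq_prod]
  have hsplit := MeasureTheory.setIntegral_prod_mul (μ := (volume : Measure ℝ))
    (ν := (volume : Measure ℝ))
    ((Set.Iic s).indicator (fun r : ℝ => ((r ^ (a+b+1) : ℝ) : ℂ)))
    (fun θ : ℝ => Complex.exp (c * θ)) (Set.Ioi 0) (Set.Ioo (-π) π)
  rw [hsplit]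
  have hrint : ∫ r in Set.Ioi (0:ℝ), (Set.Iic s).indicator
      (fun r : ℝ => ((r ^ (a+b+1) : ℝ) : ℂ)) r
      = ((s ^ (a+b+2) / (a+b+2) : ℝ) : ℂ) := by
    rw [MeasureTheory.setIntegral_indicator measurableSet_Iic]
    rw [Set.Ioi_inter_Iic, ← intervalIntegral.integral_of_le hs.le]
    rw [intervalIntegral.integral_ofReal, integral_pow]
    norm_num
    push_cast
    ring_nf
  rw [hrint]
  by_cases hab : a = b
  · subst hab
    have : c = 0 := by rw [hcdef]; ring
    rw [this]
    simp only [zero_mul, Complex.exp_zero, if_pos rfl]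
    rw [MeasureTheory.setIntegral_const]
    simp only [Measure.real, Real.volume_Ioo, smul_eq_mul, mul_one]
    rw [ENNReal.toReal_ofReal (by linarith : (0:ℝ) ≤ π - -π)]
    rw [Complex.real_smul]
    push_cast
    have h1 : ((a:ℂ) + a + 2) ≠ 0 := by
      have : (((2*a+2 : ℕ)) : ℂ) ≠ 0 := Nat.cast_ne_zero.mpr (by omega)
      push_cast at this
      convert this using 2
      ring
    have h2 : ((a:ℂ) + 1) ≠ 0 := by
      have : (((a+1 : ℕ)) : ℂ) ≠ 0 := Nat.cast_ne_zero.mpr (by omega)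
      push_cast at this
      exact this
    have h3 : (2 + (a:ℂ) * 2) ≠ 0 := by
      rw [show (2 + (a:ℂ) * 2) = a + a + 2 by ring]; exact h1
    field_simp
    linear_combination (↑s ^ 2 * ↑s ^ (a * 2) : ℂ) * (mul_inv_cancel₀ h3)
  · have hc : c ≠ 0 := by
      rw [hcdef]
      simp only [ne_eq, mul_eq_zero, Complex.I_ne_zero, or_false, sub_eq_zero]
      exact_mod_cast hab
    rw [exp_theta_integral c hc ((a:ℤ) - b) (by rw [hcdef]; push_cast; ring), mul_zero,
      if_neg hab]

lemma polydisc_eq_pi {p : ℕ} (s : ℝ) :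
    {z : Fin p → ℂ | ∀ i, ‖z i‖ ≤ s}
      = Set.univ.pi (fun _ : Fin p => Metric.closedBall (0:ℂ) s) := by
  ext z
  simp [Metric.mem_closedBall, dist_zero_right]

lemma polydisc_integral_prod {p : ℕ} (s : ℝ) (f : Fin p → ℂ → ℂ) :
    ∫ z in {z : Fin p → ℂ | ∀ i, ‖z i‖ ≤ s}, ∏ i, f i (z i)
      = ∏ i, ∫ w in Metric.closedBall (0:ℂ) s, f i w := by
  rw [polydisc_eq_pi]
  rw [← MeasureTheory.integral_indicator
    (MeasurableSet.univ_pi (fun _ => measurableSet_closedBall))]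
  have heq : (Set.univ.pi (fun _ : Fin p => Metric.closedBall (0:ℂ) s)).indicator
      (fun z => ∏ i, f i (z i))
      = fun z => ∏ i, (Metric.closedBall (0:ℂ) s).indicator (f i) (z i) := by
    funext z
    by_cases h : z ∈ Set.univ.pi (fun _ : Fin p => Metric.closedBall (0:ℂ) s)
    · rw [Set.indicator_of_mem h]
      exact Finset.prod_congr rfl fun i _ =>
        (Set.indicator_of_mem (h i (Set.mem_univ i)) _).symm
    · rw [Set.indicator_of_notMem h]
      rw [Set.mem_pi] at h
      push_neg at h
      obtain ⟨i, _, hi⟩ := h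
      exact (Finset.prod_eq_zero (Finset.mem_univ i) (Set.indicator_of_notMem hi _)).symm
  rw [heq, MeasureTheory.integral_fintype_prod_volume_eq_prod]
  exact Finset.prod_congr rfl fun i _ =>
    MeasureTheory.integral_indicator measurableSet_closedBall

lemma polydisc_monomial_integral {p : ℕ} (s : ℝ) (hs : 0 < s) (I J : Fin p → ℕ) :
    ∫ z in {z : Fin p → ℂ | ∀ i, ‖z i‖ ≤ s},
        (∏ i, z i ^ J i) * (starRingEnd ℂ) (∏ i, z i ^ I i)
      = if J = I then (((∏ i, (π * s ^ (2 * I i + 2) / (I i + 1))) : ℝ) : ℂ) else 0 := by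
  have hintegrand : ∀ z : Fin p → ℂ,
      (∏ i, z i ^ J i) * (starRingEnd ℂ) (∏ i, z i ^ I i)
        = ∏ i, (z i ^ J i * (starRingEnd ℂ) (z i) ^ I i) := by
    intro z
    rw [map_prod, ← Finset.prod_mul_distrib]
    exact Finset.prod_congr rfl fun i _ => by rw [map_pow]
  simp_rw [hintegrand]
  rw [polydisc_integral_prod s (fun i w => w ^ J i * (starRingEnd ℂ) w ^ I i)]
  simp_rw [disc_monomial_integral s hs]
  by_cases h : J = I
  · subst h
    simp only [eq_self_iff_true, if_true, Complex.ofReal_prod]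
  · rw [if_neg h]
    obtain ⟨i, hi⟩ := Function.ne_iff.mp h
    exact Finset.prod_eq_zero (Finset.mem_univ i) (by rw [if_neg hi])

lemma card_piAntidiag_le (p k : ℕ) :
    (Finset.piAntidiag (Finset.univ : Finset (Fin p)) k).card ≤ p ^ k := by
  have h := Finset.sum_pow_eq_sum_piAntidiag (Finset.univ : Finset (Fin p))
    (fun _ => (1 : ℕ)) k
  simp only [Finset.sum_const, Finset.card_univ, Fintype.card_fin, smul_eq_mul, mul_one,
    one_pow, Finset.prod_const_one] at h
  rw [h]
  calc (Finset.piAntidiag (Finset.univ : Finset (Fin p)) k).card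
      = ∑ _f ∈ Finset.piAntidiag (Finset.univ : Finset (Fin p)) k, 1 := by
        rw [Finset.sum_const, smul_eq_mul, mul_one]
    _ ≤ ∑ f ∈ Finset.piAntidiag (Finset.univ : Finset (Fin p)) k,
        Nat.multinomial Finset.univ f :=
        Finset.sum_le_sum fun f _ => Nat.succ_le_of_lt (Nat.multinomial_pos _ _)

lemma geom_tail {m : ℕ} (ε : ℝ) (hε : 0 < ε) (hε' : ε < 1/2) (D : Finset ℕ)
    (hD : ∀ k ∈ D, m ≤ k) :
    ∑ k ∈ D, ε ^ k ≤ 2 * ε ^ m := by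
  have h1 : ∀ k ∈ D, ε ^ k ≤ ε ^ m * (1/2 : ℝ) ^ (k - m) := by
    intro k hk
    have hkm : k = m + (k - m) := by have := hD k hk; omega
    calc ε ^ k = ε ^ m * ε ^ (k - m) := by rw [← pow_add, ← hkm]
      _ ≤ ε ^ m * (1/2 : ℝ) ^ (k - m) :=
          mul_le_mul_of_nonneg_left (pow_le_pow_left₀ hε.le hε'.le _) (pow_nonneg hε.le m)
  calc ∑ k ∈ D, ε ^ k ≤ ∑ k ∈ D, ε ^ m * (1/2 : ℝ) ^ (k - m) := Finset.sum_le_sum h1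
    _ = ε ^ m * ∑ k ∈ D, (1/2 : ℝ) ^ (k - m) := by rw [Finset.mul_sum]
    _ ≤ ε ^ m * 2 := by
        have hinj : ∀ x ∈ D, ∀ y ∈ D, x - m = y - m → x = y := by
          intro x hx y hy hxy
          have := hD x hx; have := hD y hy; omega
        have himg : ∑ k ∈ D, (1/2 : ℝ) ^ (k - m)
            = ∑ j ∈ D.image (· - m), (1/2 : ℝ) ^ j := by
          rw [Finset.sum_image hinj]
        rw [himg]
        have hle : ∑ j ∈ D.image (· - m), ((1:ℝ)/2) ^ j ≤ ∑' j : ℕ, ((1:ℝ)/2) ^ j :=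
          summable_geometric_two.sum_le_tsum _ (fun j _ => by positivity)
        rw [tsum_geometric_two] at hle
        gcongr
    _ = 2 * ε ^ m := by ring

lemma tail_sum_le {p m : ℕ} (hp : 1 ≤ p) (ε : ℝ) (hε : 0 < ε) (hε' : ε < 1/2)
    (T : Finset (Fin p → ℕ)) (hT : ∀ I ∈ T, m ≤ ∑ i, I i) :
    ∑ I ∈ T, (ε / p) ^ (∑ i, I i) ≤ 2 * ε ^ m := by
  have hp' : (0:ℝ) < p := by exact_mod_cast hp
  have hcomp := Finset.sum_comp (M := ℝ) (s := T) (fun k => (ε / (p:ℝ)) ^ k)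
    (fun I : Fin p → ℕ => ∑ i, I i)
  rw [hcomp]
  have hstep : ∀ k ∈ T.image (fun I => ∑ i, I i),
      ((T.filter fun I => (∑ i, I i) = k).card • (ε / (p:ℝ)) ^ k) ≤ ε ^ k := by
    intro k _
    have hsub : T.filter (fun I => (∑ i, I i) = k)
        ⊆ Finset.piAntidiag (Finset.univ : Finset (Fin p)) k := by
      intro I hI
      rw [Finset.mem_filter] at hI
      rw [Finset.mem_piAntidiag]
      exact ⟨hI.2, fun i _ => Finset.mem_univ i⟩
    have hcard : (T.filter fun I => (∑ i, I i) = k).card ≤ p ^ k :=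
      (Finset.card_le_card hsub).trans (card_piAntidiag_le p k)
    calc ((T.filter fun I => (∑ i, I i) = k).card • (ε / (p:ℝ)) ^ k)
        ≤ (p ^ k : ℕ) • (ε / (p:ℝ)) ^ k := by
          exact nsmul_le_nsmul_left (by positivity) hcard
      _ = (p:ℝ) ^ k * (ε / (p:ℝ)) ^ k := by
          rw [nsmul_eq_mul]; push_cast; ring
      _ = ε ^ k := by
          rw [div_pow, mul_div_cancel₀]
          positivity
  calc ∑ k ∈ T.image (fun I => ∑ i, I i),
        ((T.filter fun I => (∑ i, I i) = k).card • (ε / (p:ℝ)) ^ k)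
      ≤ ∑ k ∈ T.image (fun I => ∑ i, I i), ε ^ k := Finset.sum_le_sum hstep
    _ ≤ 2 * ε ^ m := by
        apply geom_tail ε hε hε'
        intro k hk
        rw [Finset.mem_image] at hk
        obtain ⟨I, hI, rfl⟩ := hk
        exact hT I hI

end Auxiliary

/-- If `F` is holomorphic on a domain containing the closed polydisc `{|zᵢ| ≤ 2R} ⊆ ℂᵖ`
and all nonconstant Taylor terms of total degree `< m` vanish, then for `0 < ε < 1/2` and
`|z| ≤ εR/p` (Euclidean norm), `|F(z) − c| ≤ 2 (2π)^{-p/2} R^{-p} ε^m (∫_{|zᵢ|≤2R} |F|²)^{1/2}`. -/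
theorem jet_tangency_sup_bound
    {p m : ℕ} (hp : 1 ≤ p) (hm : 1 ≤ m) (R ε : ℝ) (hR : 0 < R)
    (hε : 0 < ε) (hε' : ε < 1 / 2)
    (U : Set (Fin p → ℂ)) (hU : IsOpen U)
    (hpoly : {z : Fin p → ℂ | ∀ i, ‖z i‖ ≤ 2 * R} ⊆ U)
    (F : (Fin p → ℂ) → ℂ) (a : (Fin p → ℕ) → ℂ) (c : ℂ)
    (hF : DifferentiableOn ℂ F U)
    (ha : ∀ z : Fin p → ℂ, (∀ i, ‖z i‖ < 2 * R) →
      HasSum (fun I : Fin p → ℕ => a I * ∏ i, z i ^ I i) (F z))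
    (hc : a (fun _ => 0) = c)
    (hvanish : ∀ I : Fin p → ℕ, 1 ≤ ∑ i, I i → ∑ i, I i < m → a I = 0) :
    ∀ z : Fin p → ℂ, Real.sqrt (∑ i, ‖z i‖ ^ 2) ≤ ε * R / p →
      ‖F z - c‖ ≤ 2 * (2 * π) ^ (-(p : ℝ) / 2) * R ^ (-(p : ℤ)) * ε ^ m *
        Real.sqrt (∫ w in {w : Fin p → ℂ | ∀ i, ‖w i‖ ≤ 2 * R}, ‖F w‖ ^ 2) := by
  intro z hz
  have hπ : (0:ℝ) < π := Real.pi_pos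
  have hp' : (1:ℝ) ≤ (p:ℝ) := by exact_mod_cast hp
  have hp0 : (0:ℝ) < (p:ℝ) := by linarith
  set s : ℝ := Real.sqrt 2 * R with hsdef
  have hsq2 := Real.sq_sqrt (by norm_num : (0:ℝ) ≤ 2)
  have hsq2' := Real.sqrt_nonneg 2
  have hsqrt2 : (1:ℝ) < Real.sqrt 2 := by nlinarith
  have hsqrt2' : Real.sqrt 2 < 2 := by nlinarith
  have hs : 0 < s := by positivity
  have hs2R : s < 2 * R := by rw [hsdef]; nlinarith
  set S := {w : Fin p → ℂ | ∀ i, ‖w i‖ ≤ s} with hSdef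
  set T := {w : Fin p → ℂ | ∀ i, ‖w i‖ ≤ 2*R} with hTdef
  have hST : S ⊆ T := fun w hw i => (hw i).trans hs2R.le
  have hSmeas : MeasurableSet S := by
    rw [hSdef, polydisc_eq_pi]
    exact MeasurableSet.univ_pi fun _ => measurableSet_closedBall
  have hTmeas : MeasurableSet T := by
    rw [hTdef, polydisc_eq_pi]
    exact MeasurableSet.univ_pi fun _ => measurableSet_closedBall
  have hScompact : IsCompact S := by
    rw [hSdef, polydisc_eq_pi]
    exact isCompact_univ_pi fun _ => isCompact_closedBall _ _
  have hTcompact : IsCompact T := by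
    rw [hTdef, polydisc_eq_pi]
    exact isCompact_univ_pi fun _ => isCompact_closedBall _ _
  have hFcont : ContinuousOn F T := (hF.continuousOn).mono hpoly
  have hFcontS : ContinuousOn F S := hFcont.mono hST
  have hF2int : IntegrableOn (fun w => ‖F w‖^2) T volume :=
    ((hFcont.norm).pow 2).integrableOn_compact hTcompact
  set X := ∫ w in S, ‖F w‖^2 with hXdef
  set L := Real.sqrt (∫ w in T, ‖F w‖^2) with hLdef
  have hXnonneg : 0 ≤ X :=
    setIntegral_nonneg hSmeas fun w _ => by positivity
  have hXle : X ≤ ∫ w in T, ‖F w‖^2 :=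
    setIntegral_mono_set hF2int
      (Filter.Eventually.of_forall fun w => by positivity)
      (HasSubset.Subset.eventuallyLE hST)
  have hsqrtX : Real.sqrt X ≤ L := Real.sqrt_le_sqrt hXle
  have hLnonneg : 0 ≤ L := Real.sqrt_nonneg _
  -- summability of coefficients against radius s
  have hsum_s : Summable (fun J : Fin p → ℕ => ‖a J‖ * s ^ (∑ i, J i)) := by
    have hmem : ∀ i : Fin p, ‖((fun _ : Fin p => ((s:ℝ):ℂ)) i)‖ < 2 * R := by
      intro i
      simpa [Complex.norm_real, abs_of_pos hs] using hs2R
    have h := ((ha (fun _ => ((s:ℝ):ℂ)) hmem).summable).norm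
    have heq : (fun J : Fin p → ℕ => ‖a J * ∏ i, ((s:ℝ):ℂ) ^ J i‖)
        = fun J : Fin p → ℕ => ‖a J‖ * s ^ (∑ i, J i) := by
      funext J
      rw [norm_mul, norm_prod]
      congr 1
      rw [← Finset.prod_pow_eq_pow_sum]
      exact Finset.prod_congr rfl fun i _ => by
        rw [norm_pow, Complex.norm_real, Real.norm_eq_abs, abs_of_pos hs]
    rwa [heq] at h
  -- the coefficient bound
  have hcoef : ∀ I : Fin p → ℕ,
      ‖a I‖ * (Real.sqrt π ^ p * s ^ p * R ^ (∑ i, I i)) ≤ L := by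
    intro I
    set k := ∑ i, I i with hkdef
    set wI : ℝ := ∏ i, (π * s ^ (2 * I i + 2) / (I i + 1)) with hwIdef
    have hwIpos : 0 < wI := Finset.prod_pos fun i _ => by positivity
    set g : (Fin p → ℂ) → ℂ := fun w => ∏ i, w i ^ I i with hgdef
    have hgcont : Continuous g := by
      apply continuous_finset_prod
      exact fun i _ => (continuous_apply i).pow (I i)
    -- the integral identity ∫_S F * conj g = a I * wI
    have hIval : ∫ w in S, F w * (starRingEnd ℂ) (g w) = a I * (wI : ℂ) := by
      have hrep : ∀ w ∈ S, F w * (starRingEnd ℂ) (g w)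
          = ∑' J : Fin p → ℕ, (a J * ∏ i, w i ^ J i) * (starRingEnd ℂ) (g w) := by
        intro w hw
        rw [tsum_mul_right, (ha w (fun i => lt_of_le_of_lt (hw i) hs2R)).tsum_eq]
      rw [setIntegral_congr_fun hSmeas hrep]
      have hswap : ∫ w in S, (∑' J : Fin p → ℕ, (a J * ∏ i, w i ^ J i)
            * (starRingEnd ℂ) (g w)) ∂volume
          = ∑' J : Fin p → ℕ, ∫ w in S, (a J * ∏ i, w i ^ J i)
            * (starRingEnd ℂ) (g w) ∂volume := by
        apply integral_tsum
        · intro J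
          apply Continuous.aestronglyMeasurable
          exact (continuous_const.mul (continuous_finset_prod _
            (fun i _ => (continuous_apply i).pow (J i)))).mul
            (Complex.continuous_conj.comp hgcont)
        · -- finiteness
          have hbd : ∀ J : Fin p → ℕ, (∫⁻ w in S, ‖(a J * ∏ i, w i ^ J i)
              * (starRingEnd ℂ) (g w)‖₊ ∂volume)
              ≤ ENNReal.ofReal ((‖a J‖ * s ^ (∑ i, J i)) * s ^ k) * volume S := by
            intro J
            have hpt : ∀ w ∈ S, (‖(a J * ∏ i, w i ^ J i) * (starRingEnd ℂ) (g w)‖₊ : ℝ≥0∞)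
                ≤ ENNReal.ofReal ((‖a J‖ * s ^ (∑ i, J i)) * s ^ k) := by
              intro w hw
              rw [← norm_toNNReal]
              apply ENNReal.ofReal_le_ofReal
              rw [norm_mul, norm_mul, norm_prod, RCLike.norm_conj, hgdef, norm_prod]
              have h1 : ∏ i, ‖w i ^ J i‖ ≤ s ^ (∑ i, J i) := by
                rw [← Finset.prod_pow_eq_pow_sum]
                apply Finset.prod_le_prod (fun i _ => by positivity)
                intro i _
                rw [norm_pow]
                exact pow_le_pow_left₀ (norm_nonneg _) (hw i) (J i)
              have h2 : ∏ i, ‖w i ^ I i‖ ≤ s ^ k := by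
                rw [hkdef, ← Finset.prod_pow_eq_pow_sum]
                apply Finset.prod_le_prod (fun i _ => by positivity)
                intro i _
                rw [norm_pow]
                exact pow_le_pow_left₀ (norm_nonneg _) (hw i) (I i)
              have h3 : (0:ℝ) ≤ ‖a J‖ := norm_nonneg _
              exact mul_le_mul (mul_le_mul_of_nonneg_left h1 h3) h2
                (Finset.prod_nonneg fun i _ => norm_nonneg _) (by positivity)
            calc (∫⁻ w in S, ‖(a J * ∏ i, w i ^ J i) * (starRingEnd ℂ) (g w)‖₊ ∂volume)
                ≤ ∫⁻ _ in S, ENNReal.ofReal ((‖a J‖ * s ^ (∑ i, J i)) * s ^ k) ∂volume :=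
                  setLIntegral_mono measurable_const hpt
              _ = ENNReal.ofReal ((‖a J‖ * s ^ (∑ i, J i)) * s ^ k) * volume S := by
                  rw [setLIntegral_const]
          apply ne_of_lt
          calc (∑' J : Fin p → ℕ, ∫⁻ w in S, ‖(a J * ∏ i, w i ^ J i)
                * (starRingEnd ℂ) (g w)‖₊ ∂volume)
              ≤ ∑' J : Fin p → ℕ,
                ENNReal.ofReal ((‖a J‖ * s ^ (∑ i, J i)) * s ^ k) * volume S :=
                ENNReal.tsum_le_tsum hbd
            _ = (∑' J : Fin p → ℕ,
                ENNReal.ofReal ((‖a J‖ * s ^ (∑ i, J i)) * s ^ k)) * volume S :=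
                ENNReal.tsum_mul_right
            _ < ⊤ := by
                apply ENNReal.mul_lt_top
                · rw [← ENNReal.ofReal_tsum_of_nonneg (fun J => by positivity)
                    (hsum_s.mul_right _)]
                  exact ENNReal.ofReal_lt_top
                · exact hScompact.measure_lt_top
      rw [hswap]
      have hterm : ∀ J : Fin p → ℕ,
          (∫ w in S, (a J * ∏ i, w i ^ J i) * (starRingEnd ℂ) (g w) ∂volume)
          = a J * (if J = I then ((wI : ℝ) : ℂ) else 0) := by
        intro J
        have : ∀ w : Fin p → ℂ, (a J * ∏ i, w i ^ J i) * (starRingEnd ℂ) (g w)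
            = a J * ((∏ i, w i ^ J i) * (starRingEnd ℂ) (∏ i, w i ^ I i)) := by
          intro w; rw [hgdef]; ring
        simp_rw [this]
        rw [integral_const_mul, hSdef, polydisc_monomial_integral s hs I J, hwIdef]
      simp_rw [hterm]
      rw [tsum_eq_single I (fun J hJ => by rw [if_neg hJ, mul_zero])]
      simp
    -- Cauchy-Schwarz
    have hgnorm : ∫ w in S, ‖g w‖^2 = wI := by
      have h1 : ∫ w in S, (g w * (starRingEnd ℂ) (g w)) = (wI : ℂ) := by
        have := polydisc_monomial_integral s hs I I
        rw [if_pos rfl] at this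
        rw [hgdef, hwIdef]
        exact this
      have h2 : ∀ w : Fin p → ℂ, g w * (starRingEnd ℂ) (g w) = ((‖g w‖^2 : ℝ) : ℂ) := by
        intro w
        rw [Complex.mul_conj, Complex.normSq_eq_norm_sq]
      simp_rw [h2] at h1
      have h3 : ((∫ w in S, ‖g w‖^2 : ℝ) : ℂ) = ((wI : ℝ) : ℂ) := by
        rw [← h1]
        exact (integral_ofReal (𝕜 := ℂ)).symm
      exact_mod_cast h3
    have hg2int : IntegrableOn (fun w => ‖g w‖^2) S volume :=
      ((hgcont.continuousOn.norm).pow 2).integrableOn_compact hScompact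
    have hCS : ‖a I‖ * wI ≤ Real.sqrt X * Real.sqrt wI := by
      have hnormval : ‖a I‖ * wI = ‖∫ w in S, F w * (starRingEnd ℂ) (g w)‖ := by
        rw [hIval, norm_mul, Complex.norm_real, Real.norm_eq_abs, abs_of_pos hwIpos]
      rw [hnormval]
      calc ‖∫ w in S, F w * (starRingEnd ℂ) (g w)‖
          ≤ ∫ w in S, ‖F w * (starRingEnd ℂ) (g w)‖ := norm_integral_le_integral_norm _
        _ = ∫ w in S, ‖F w‖ * ‖g w‖ := by
            apply setIntegral_congr_fun hSmeas
            intro w _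
            show ‖F w * (starRingEnd ℂ) (g w)‖ = ‖F w‖ * ‖g w‖
            rw [norm_mul, RCLike.norm_conj]
        _ ≤ (∫ w in S, ‖F w‖ ^ (2:ℝ)) ^ ((1:ℝ)/2) * (∫ w in S, ‖g w‖ ^ (2:ℝ)) ^ ((1:ℝ)/2) := by
            apply integral_mul_le_Lp_mul_Lq_of_nonneg
              Real.HolderConjugate.two_two
              (Filter.Eventually.of_forall fun w => norm_nonneg _)
              (Filter.Eventually.of_forall fun w => norm_nonneg _)
            · rw [show ENNReal.ofReal (2:ℝ) = 2 by norm_num]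
              rw [memLp_two_iff_integrable_sq
                (hFcontS.norm.aestronglyMeasurable hSmeas)]
              have : ∀ w : Fin p → ℂ, ‖F w‖ ^ (2:ℕ) = ‖F w‖ ^ (2:ℕ) := fun _ => rfl
              exact (by exact_mod_cast hF2int.mono_set hST :
                Integrable (fun w => ‖F w‖ ^ (2:ℕ)) (volume.restrict S))
            · rw [show ENNReal.ofReal (2:ℝ) = 2 by norm_num]
              rw [memLp_two_iff_integrable_sq
                (hgcont.norm.aestronglyMeasurable)]
              exact_mod_cast hg2int
        _ = Real.sqrt X * Real.sqrt wI := by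
            have hXi : ∫ w in S, ‖F w‖ ^ (2:ℝ) = X := by
              rw [hXdef]
              apply setIntegral_congr_fun hSmeas
              intro w _
              show ‖F w‖ ^ (2:ℝ) = ‖F w‖ ^ (2:ℕ)
              rw [← Real.rpow_natCast ‖F w‖ 2]
              norm_num
            have hwIi : ∫ w in S, ‖g w‖ ^ (2:ℝ) = wI := by
              rw [← hgnorm]
              apply setIntegral_congr_fun hSmeas
              intro w _
              show ‖g w‖ ^ (2:ℝ) = ‖g w‖ ^ (2:ℕ)
              rw [← Real.rpow_natCast ‖g w‖ 2]
              norm_num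
            rw [hXi, hwIi, Real.sqrt_eq_rpow, Real.sqrt_eq_rpow]
    -- conclude
    have hcancel : ‖a I‖ * Real.sqrt wI ≤ L := by
      have hsq : 0 < Real.sqrt wI := Real.sqrt_pos.mpr hwIpos
      have h2 : ‖a I‖ * Real.sqrt wI * Real.sqrt wI ≤ Real.sqrt X * Real.sqrt wI := by
        calc ‖a I‖ * Real.sqrt wI * Real.sqrt wI = ‖a I‖ * wI := by
              rw [mul_assoc, Real.mul_self_sqrt hwIpos.le]
          _ ≤ Real.sqrt X * Real.sqrt wI := hCS
      exact (le_of_mul_le_mul_right h2 hsq).trans hsqrtX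
    have hlow : Real.sqrt π ^ p * s ^ p * R ^ k ≤ Real.sqrt wI := by
      have hlow0 : (0:ℝ) ≤ Real.sqrt π ^ p * s ^ p * R ^ k := by positivity
      rw [show Real.sqrt π ^ p * s ^ p * R ^ k
          = Real.sqrt ((Real.sqrt π ^ p * s ^ p * R ^ k)^2) from
          (Real.sqrt_sq hlow0).symm]
      apply Real.sqrt_le_sqrt
      have hs2 : s^2 = 2 * R^2 := by rw [hsdef, mul_pow, hsq2]
      have hprodR : ∏ i : Fin p, R ^ (2 * I i) = R ^ (2 * k) := by
        rw [hkdef, Finset.mul_sum, ← Finset.prod_pow_eq_pow_sum]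
      have hexp : (Real.sqrt π ^ p * s ^ p * R ^ k)^2
          = ∏ i : Fin p, (π * s^2 * R ^ (2 * I i)) := by
        rw [Finset.prod_mul_distrib, Finset.prod_mul_distrib]
        rw [Finset.prod_const, Finset.prod_const, Finset.card_univ, Fintype.card_fin, hprodR]
        have hππ : (Real.sqrt π)^2 = π := Real.sq_sqrt hπ.le
        calc (Real.sqrt π ^ p * s ^ p * R ^ k)^2
            = ((Real.sqrt π)^2)^p * (s^2)^p * (R^k)^2 := by ring
          _ = π ^ p * (s^2)^p * R^(2*k) := by
              rw [hππ, ← pow_mul R k 2, mul_comm k 2]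
      rw [hexp, hwIdef]
      apply Finset.prod_le_prod (fun i _ => by positivity)
      intro i _
      have h2pow : ((I i : ℝ)) + 1 ≤ 2 ^ I i := by
        exact_mod_cast Nat.lt_two_pow_self (n := I i)
      rw [le_div_iff₀ (by positivity : (0:ℝ) < (I i:ℝ) + 1)]
      have hs2i : s^(2*I i) = 2^(I i) * R^(2*I i) := by
        rw [pow_mul, hs2, mul_pow, ← pow_mul]
      calc π * s^2 * R^(2*I i) * ((I i:ℝ)+1)
          ≤ π * s^2 * R^(2*I i) * 2^(I i) := by
            apply mul_le_mul_of_nonneg_left h2pow (by positivity)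
        _ = π * s^(2*I i + 2) := by
            rw [pow_add, hs2i]
            ring
    calc ‖a I‖ * (Real.sqrt π ^ p * s ^ p * R ^ k)
        ≤ ‖a I‖ * Real.sqrt wI := by
          apply mul_le_mul_of_nonneg_left hlow (norm_nonneg _)
      _ ≤ L := hcancel
  -- final assembly
  have hzb : ∀ i, ‖z i‖ ≤ ε * R / p := by
    intro i
    have h1 : ‖z i‖ = Real.sqrt (‖z i‖^2) := (Real.sqrt_sq (norm_nonneg _)).symm
    rw [h1]
    refine le_trans (Real.sqrt_le_sqrt ?_) hz
    exact Finset.single_le_sum (fun j _ => sq_nonneg ‖z j‖) (Finset.mem_univ i)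
  have hzlt : ∀ i, ‖z i‖ < 2 * R := by
    intro i
    refine lt_of_le_of_lt (hzb i) ?_
    rw [div_lt_iff₀ hp0]
    nlinarith
  have hFz := ha z hzlt
  have hfn : Summable (fun I : Fin p → ℕ => ‖a I * ∏ i, z i ^ I i‖) := hFz.summable.norm
  set gz : (Fin p → ℕ) → ℂ :=
    fun I => if I = (fun _ => 0) then 0 else a I * ∏ i, z i ^ I i with hgzdef
  have hgle : ∀ I, ‖gz I‖ ≤ ‖a I * ∏ i, z i ^ I i‖ := by
    intro I
    rw [hgzdef]
    by_cases h : I = (fun _ => 0)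
    · simp [h]
    · simp [h]
  have hgn : Summable (fun I => ‖gz I‖) :=
    Summable.of_nonneg_of_le (fun I => norm_nonneg _) hgle hfn
  have hdiff : F z - c = ∑' I, gz I := by
    have h0 : a (fun _ => 0) * ∏ i : Fin p, z i ^ (0:ℕ) = c := by
      simp [hc]
    have hkey := hFz.summable.tsum_eq_add_tsum_ite (fun _ => 0)
    rw [hFz.tsum_eq] at hkey
    rw [hgzdef]
    rw [hkey, h0]
    ring
  rw [hdiff]
  refine le_trans (norm_tsum_le_tsum_norm hgn) ?_
  apply hgn.tsum_le_of_sum_le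
  intro Tf
  set Q : ℝ := L / (Real.sqrt π ^ p * s ^ p) with hQdef
  have hQ0 : 0 ≤ Q := div_nonneg hLnonneg (by positivity)
  have hfilter : ∑ I ∈ Tf, ‖gz I‖
      = ∑ I ∈ Tf.filter (fun I => m ≤ ∑ i, I i), ‖gz I‖ := by
    symm
    apply Finset.sum_filter_of_ne
    intro I _ hne
    by_contra hlt
    push_neg at hlt
    apply hne
    rw [hgzdef]
    by_cases h : I = (fun _ => 0)
    · simp [h]
    · simp only [if_neg h]
      have h1 : 1 ≤ ∑ i, I i := by
        obtain ⟨i, hi⟩ := Function.ne_iff.mp h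
        have : 1 ≤ I i := by omega
        calc 1 ≤ I i := this
          _ ≤ ∑ j, I j := Finset.single_le_sum (fun j _ => Nat.zero_le _) (Finset.mem_univ i)
      rw [hvanish I h1 hlt, zero_mul, norm_zero]
  rw [hfilter]
  have hterm : ∀ I ∈ Tf.filter (fun I => m ≤ ∑ i, I i),
      ‖gz I‖ ≤ Q * (ε/p)^(∑ i, I i) := by
    intro I _
    have hIle : ‖gz I‖ ≤ ‖a I‖ * (ε*R/p)^(∑ i, I i) := by
      refine le_trans (hgle I) ?_
      rw [norm_mul, norm_prod]
      apply mul_le_mul_of_nonneg_left _ (norm_nonneg _)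
      rw [← Finset.prod_pow_eq_pow_sum]
      apply Finset.prod_le_prod (fun i _ => norm_nonneg _)
      intro i _
      rw [norm_pow]
      exact pow_le_pow_left₀ (norm_nonneg _) (hzb i) _
    refine hIle.trans ?_
    have hpos : (0:ℝ) < Real.sqrt π ^ p * s ^ p * R ^ (∑ i, I i) := by positivity
    have haI : ‖a I‖ ≤ L / (Real.sqrt π ^ p * s ^ p * R ^ (∑ i, I i)) := by
      rw [le_div_iff₀ hpos]
      exact hcoef I
    calc ‖a I‖ * (ε*R/p)^(∑ i, I i)
        ≤ (L / (Real.sqrt π ^ p * s ^ p * R ^ (∑ i, I i))) * (ε*R/p)^(∑ i, I i) := by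
          apply mul_le_mul_of_nonneg_right haI (by positivity)
      _ = Q * (ε/p)^(∑ i, I i) := by
          rw [hQdef, show ε * R / (p:ℝ) = (ε/p) * R by ring, mul_pow]
          have hRk : (0:ℝ) < R ^ (∑ i, I i) := by positivity
          field_simp
          ring
  calc ∑ I ∈ Tf.filter (fun I => m ≤ ∑ i, I i), ‖gz I‖
      ≤ ∑ I ∈ Tf.filter (fun I => m ≤ ∑ i, I i), Q * (ε/p)^(∑ i, I i) :=
        Finset.sum_le_sum hterm
    _ = Q * ∑ I ∈ Tf.filter (fun I => m ≤ ∑ i, I i), (ε/p)^(∑ i, I i) := by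
        rw [Finset.mul_sum]
    _ ≤ Q * (2 * ε^m) := by
        apply mul_le_mul_of_nonneg_left _ hQ0
        apply tail_sum_le hp ε hε (by linarith)
        intro I hI
        exact (Finset.mem_filter.mp hI).2
    _ = 2 * (2*π)^(-(p:ℝ)/2) * R^(-(p:ℤ)) * ε^m * L := by
        have h2π : (0:ℝ) < 2*π := by positivity
        have e1 : (2*π) ^ (-(p:ℝ)/2) = ((2*π) ^ ((1:ℝ)/2)) ^ (-(p:ℝ)) := by
          rw [← Real.rpow_mul h2π.le]
          congr 1
          ring
        have e2 : ((2*π) : ℝ) ^ ((1:ℝ)/2) = Real.sqrt (2*π) := by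
          rw [Real.sqrt_eq_rpow]
        have e3 : (Real.sqrt (2*π)) ^ (-(p:ℝ)) = ((Real.sqrt (2*π)) ^ (p:ℕ))⁻¹ := by
          rw [Real.rpow_neg (Real.sqrt_nonneg _), Real.rpow_natCast]
        have e4 : Real.sqrt (2*π) = Real.sqrt 2 * Real.sqrt π :=
          Real.sqrt_mul (by norm_num) π
        have e5 : (R:ℝ) ^ (-(p:ℤ)) = (R ^ (p:ℕ))⁻¹ := by
          rw [zpow_neg, zpow_natCast]
        rw [e1, e2, e3, e4, e5, hQdef, hsdef, mul_pow, mul_pow]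
        have hsp : (0:ℝ) < Real.sqrt π := Real.sqrt_pos.mpr hπ
        field_simp
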